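/- arXiv:2511.22514 — 2 statements merged into one kernel-verified Lean document; each statement's English description precedes it below -/
import Mathlib

section
/- The map φ_n from the free monoid on {1,...,n} to the monoid of n×n upper triangular tropical matrices, defined by φ_n(ε) = the tropical identity matrix and, for nonempty w, φ_n(w)_{p,q} = w_{p,q} (the maximum length of a weakly increasing subsequence of w with entries in [p,q]) when p ≤ q and -∞ when p > q, is a monoid homomorphism. -/
/-- The maximum length of a weakly increasing subsequence of `w` all of whose
letters lie in the interval `[p, q]`. -/
def wis (w : List ℕ) (p q : ℕ) : ℕ :=
  ((w.sublists.filter (fun s => decide (s.Pairwise (· ≤ ·) ∧ ∀ a ∈ s, p ≤ a ∧ a ≤ q))).map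
    List.length).foldr max 0

/-- The tropical representation `φ_n`: entries in the max-plus semiring ℕ ∪ {-∞},
modelled as `WithBot ℕ`. -/
def phi (n : ℕ) (w : List ℕ) : Matrix (Fin n) (Fin n) (WithBot ℕ) := fun p q =>
  if w = [] then (if p = q then 0 else ⊥)
  else if (p : ℕ) ≤ q then ((wis w (p + 1) (q + 1) : ℕ) : WithBot ℕ) else ⊥

/-- Tropical (max-plus) matrix multiplication. -/
def tropMul {n : ℕ} (A B : Matrix (Fin n) (Fin n) (WithBot ℕ)) :
    Matrix (Fin n) (Fin n) (WithBot ℕ) := fun i j =>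
  Finset.univ.sup (fun k : Fin n => A i k + B k j)

lemma le_foldr_max {L : List ℕ} {x : ℕ} (h : x ∈ L) : x ≤ L.foldr max 0 := by
  induction L with
  | nil => simp at h
  | cons a t ih =>
    rcases List.mem_cons.1 h with rfl | h
    · exact le_max_left _ _
    · exact le_trans (ih h) (le_max_right _ _)

lemma foldr_max_mem (L : List ℕ) : L.foldr max 0 ∈ L ∨ L.foldr max 0 = 0 := by
  induction L with
  | nil => simp
  | cons a t ih =>
    rcases le_or_gt (t.foldr max 0) a with h | h
    · left; simp [max_eq_left h]
    · have : max a (t.foldr max 0) = t.foldr max 0 := max_eq_right h.le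
      rw [List.foldr_cons, this]
      rcases ih with hm | h0
      · exact Or.inl (List.mem_cons_of_mem _ hm)
      · omega

lemma le_wis {w s : List ℕ} {p q : ℕ} (hsub : s.Sublist w) (hsort : s.Pairwise (· ≤ ·))
    (hmem : ∀ a ∈ s, p ≤ a ∧ a ≤ q) : s.length ≤ wis w p q := by
  apply le_foldr_max
  apply List.mem_map_of_mem
  rw [List.mem_filter]
  exact ⟨List.mem_sublists.2 hsub, decide_eq_true ⟨hsort, hmem⟩⟩

lemma exists_wis (w : List ℕ) (p q : ℕ) :
    ∃ s : List ℕ, s.Sublist w ∧ s.Pairwise (· ≤ ·) ∧ (∀ a ∈ s, p ≤ a ∧ a ≤ q) ∧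
      s.length = wis w p q := by
  have hfm := foldr_max_mem ((w.sublists.filter
      (fun s => decide (s.Pairwise (· ≤ ·) ∧ ∀ a ∈ s, p ≤ a ∧ a ≤ q))).map List.length)
  rcases hfm with h | h
  · rcases List.mem_map.1 h with ⟨s, hs, hlen⟩
    rw [List.mem_filter] at hs
    have hprop : s.Pairwise (· ≤ ·) ∧ ∀ a ∈ s, p ≤ a ∧ a ≤ q := by
      simpa using hs.2
    exact ⟨s, List.mem_sublists.1 hs.1, hprop.1, hprop.2, hlen⟩
  · exact ⟨[], List.nil_sublist _, List.Pairwise.nil, by simp, h.symm⟩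

lemma wis_lower (u v : List ℕ) (p q k : ℕ) (hpk : p ≤ k) (hkq : k ≤ q) :
    wis u p k + wis v k q ≤ wis (u ++ v) p q := by
  obtain ⟨s1, hs1, hsort1, hmem1, hlen1⟩ := exists_wis u p k
  obtain ⟨s2, hs2, hsort2, hmem2, hlen2⟩ := exists_wis v k q
  rw [← hlen1, ← hlen2, ← List.length_append]
  apply le_wis (hs1.append hs2)
  · rw [List.pairwise_append]
    exact ⟨hsort1, hsort2, fun a ha b hb =>
      le_trans (hmem1 a ha).2 (hmem2 b hb).1⟩
  · intro a ha
    rcases List.mem_append.1 ha with h | h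
    · exact ⟨(hmem1 a h).1, le_trans (hmem1 a h).2 hkq⟩
    · exact ⟨le_trans hpk (hmem2 a h).1, (hmem2 a h).2⟩

lemma wis_upper (u v : List ℕ) (p q : ℕ) (hpq : p ≤ q) :
    ∃ k, p ≤ k ∧ k ≤ q ∧ wis (u ++ v) p q ≤ wis u p k + wis v k q := by
  obtain ⟨s, hsub, hsort, hmem, hlen⟩ := exists_wis (u ++ v) p q
  obtain ⟨s1, s2, rfl, hs1, hs2⟩ := List.sublist_append_iff.1 hsub
  rw [List.pairwise_append] at hsort
  obtain ⟨hsort1, hsort2, hrel⟩ := hsort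
  rcases eq_or_ne s1 [] with rfl | hne
  · refine ⟨p, le_refl _, hpq, ?_⟩
    rw [← hlen]
    simp only [List.nil_append, List.length_nil]
    have : s2.length ≤ wis v p q := le_wis hs2 hsort2 (by simpa using hmem)
    omega
  · set k := s1.getLast hne with hk
    have hkmem : k ∈ s1 := List.getLast_mem hne
    have hks : k ∈ s1 ++ s2 := List.mem_append.2 (Or.inl hkmem)
    have hs1le : ∀ a ∈ s1, a ≤ k := by
      intro a ha
      have : s1 = s1.dropLast ++ [k] := (List.dropLast_append_getLast hne).symm
      rw [this] at hsort1 ha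
      rw [List.pairwise_append] at hsort1
      rcases List.mem_append.1 ha with h | h
      · exact hsort1.2.2 a h k (by simp)
      · simp at h; omega
    refine ⟨k, (hmem k hks).1, (hmem k hks).2, ?_⟩
    rw [← hlen, List.length_append]
    have h1 : s1.length ≤ wis u p k := le_wis hs1 hsort1
      (fun a ha => ⟨(hmem a (List.mem_append.2 (Or.inl ha))).1, hs1le a ha⟩)
    have h2 : s2.length ≤ wis v k q := le_wis hs2 hsort2
      (fun a ha => ⟨hrel k hkmem a ha, (hmem a (List.mem_append.2 (Or.inr ha))).2⟩)
    omega

theorem stmt1 (n : ℕ) :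
    (phi n [] = fun p q : Fin n => if p = q then (0 : WithBot ℕ) else ⊥) ∧
      ∀ u v : List ℕ, (∀ a ∈ u, 1 ≤ a ∧ a ≤ n) → (∀ a ∈ v, 1 ≤ a ∧ a ≤ n) →
        phi n (u ++ v) = tropMul (phi n u) (phi n v) := by
  constructor
  · funext p q
    simp [phi]
  · intro u v _ _
    rcases eq_or_ne u [] with rfl | hu
    · funext p q
      simp only [List.nil_append, tropMul]
      apply le_antisymm
      · have h0 : phi n [] p p = 0 := by simp [phi]
        have : phi n v p q = phi n [] p p + phi n v p q := by
          rw [h0, zero_add]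
        rw [this]
        exact Finset.le_sup (f := fun k => phi n [] p k + phi n v k q) (Finset.mem_univ p)
      · apply Finset.sup_le
        intro k _
        by_cases hk : p = k
        · subst hk; simp [phi]
        · simp [phi, hk]
    rcases eq_or_ne v [] with rfl | hv
    · funext p q
      simp only [List.append_nil, tropMul]
      apply le_antisymm
      · have h0 : phi n [] q q = 0 := by simp [phi]
        have : phi n u p q = phi n u p q + phi n [] q q := by
          rw [h0, add_zero]
        rw [this]
        exact Finset.le_sup (f := fun k => phi n u p k + phi n [] k q) (Finset.mem_univ q)
      · apply Finset.sup_le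
        intro k _
        by_cases hk : k = q
        · subst hk; simp [phi]
        · simp [phi, hk]
    · funext p q
      have huv : u ++ v ≠ [] := by simp [hu]
      simp only [tropMul]
      by_cases hpq : (p : ℕ) ≤ q
      · apply le_antisymm
        · obtain ⟨k, hpk, hkq, hle⟩ := wis_upper u v (p + 1) (q + 1)
            (by omega)
          have hkn : k - 1 < n := by omega
          have hk1 : (⟨k - 1, hkn⟩ : Fin n) = (⟨k - 1, hkn⟩ : Fin n) := rfl
          have hterm : phi n (u ++ v) p q ≤
              phi n u p ⟨k - 1, hkn⟩ + phi n v ⟨k - 1, hkn⟩ q := by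
            simp only [phi, if_neg hu, if_neg hv, if_neg huv, if_pos hpq]
            have h1 : (p : ℕ) ≤ k - 1 := by omega
            have h2 : (k - 1 : ℕ) ≤ q := by omega
            rw [if_pos h1, if_pos h2]
            have : k - 1 + 1 = k := by omega
            rw [this, ← Nat.cast_add, Nat.cast_le]
            exact hle
          exact le_trans hterm (Finset.le_sup (f := fun k => phi n u p k + phi n v k q)
            (Finset.mem_univ (⟨k - 1, hkn⟩ : Fin n)))
        · apply Finset.sup_le
          intro k _
          by_cases h1 : (p : ℕ) ≤ k
          · by_cases h2 : (k : ℕ) ≤ q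
            · simp only [phi, if_neg hu, if_neg hv, if_neg huv, if_pos hpq, if_pos h1, if_pos h2]
              rw [← Nat.cast_add, Nat.cast_le]
              exact wis_lower u v (p + 1) (q + 1) (k + 1) (by omega) (by omega)
            · simp [phi, if_neg hu, if_neg hv, h2]
          · simp [phi, if_neg hu, if_neg hv, h1]
      · apply le_antisymm
        · have : phi n (u ++ v) p q = ⊥ := by simp [phi, huv, hpq]
          rw [this]; exact bot_le
        · have : phi n (u ++ v) p q = ⊥ := by simp [phi, huv, hpq]
          rw [this]
          apply Finset.sup_le
          intro k _
          by_cases h1 : (p : ℕ) ≤ k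
          · have h2 : ¬ (k : ℕ) ≤ q := by omega
            simp [phi, hu, hv, h2]
          · simp [phi, hu, hv, h1]
end

section
/- Let u = u_1...u_k be a word over {1,...,n} and let std(u) = u_1'...u_k' be its standardisation (a permutation word over {1,...,k}). Fix 1 ≤ p ≤ q ≤ n such that u contains at least one letter in [p,q], and set a = 1 + (number of letters of u strictly less than p) and b = k - (number of letters of u strictly greater than q). Then the maximum length of a weakly increasing subsequence of u with entries in [p,q] equals the maximum length of a strictly increasing subsequence of std(u) with entries in [a,b]. -/
/-- The maximum length of a strictly increasing subsequence of `w` all of whose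
letters lie in the interval `[p, q]`. -/
def sis (w : List ℕ) (p q : ℕ) : ℕ :=
  ((w.sublists.filter (fun s => decide (s.Pairwise (· < ·) ∧ ∀ a ∈ s, p ≤ a ∧ a ≤ q))).map
    List.length).foldr max 0

/-- The standardisation of a word: the j-th occurrence (left to right) of a letter c
is replaced by j plus the number of letters strictly smaller than c. -/
def stdWord (u : List ℕ) : List ℕ :=
  (List.range u.length).map
    (fun i => (u.take (i + 1)).count (u.getD i 0) + u.countP (fun a => decide (a < u.getD i 0)))

lemma stdWord_length (u : List ℕ) : (stdWord u).length = u.length := by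
  simp [stdWord]

lemma stdWord_get (u : List ℕ) (i : ℕ) (h : i < u.length) :
    (stdWord u)[i]'(by rwa [stdWord_length]) =
      (u.take (i + 1)).count (u[i]) + u.countP (fun a => decide (a < u[i])) := by
  simp [stdWord, List.getD_eq_getElem, h]

lemma count_split (l : List ℕ) (c : ℕ) :
    l.countP (fun a => decide (a ≤ c)) = l.countP (fun a => decide (a < c)) + l.count c := by
  induction l with
  | nil => simp
  | cons hd t ih =>
    by_cases h1 : hd ≤ c <;> by_cases h2 : hd < c <;> by_cases h3 : hd = c <;>
      simp [List.countP_cons, List.count_cons, ih, h1, h2, h3] <;> omega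

-- count of element in its own take-prefix is at least 1
lemma one_le_count_take (u : List ℕ) (i : ℕ) (h : i < u.length) :
    1 ≤ (u.take (i + 1)).count (u[i]) := by
  rw [List.one_le_count_iff]
  have : (u.take (i + 1))[i]'(by simp; omega) = u[i] := List.getElem_take
  rw [← this]
  exact List.getElem_mem _

-- count in take is at most global count
lemma count_take_le (u : List ℕ) (m c : ℕ) : (u.take m).count c ≤ u.count c :=
  (List.take_sublist m u).count_le c

-- std upper bound: std[i] ≤ countP (≤ u[i])
lemma std_le (u : List ℕ) (i : ℕ) (h : i < u.length) :
    (stdWord u)[i]'(by rwa [stdWord_length]) ≤ u.countP (fun a => decide (a ≤ u[i])) := by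
  rw [stdWord_get u i h, count_split]
  have := count_take_le u (i+1) (u[i])
  omega

-- std lower bound: std[i] ≥ 1 + countP (< u[i])
lemma std_ge (u : List ℕ) (i : ℕ) (h : i < u.length) :
    1 + u.countP (fun a => decide (a < u[i])) ≤ (stdWord u)[i]'(by rwa [stdWord_length]) := by
  rw [stdWord_get u i h]
  have := one_le_count_take u i h
  omega

lemma countP_le_lt (u : List ℕ) {c d : ℕ} (hcd : c < d) :
    u.countP (fun a => decide (a ≤ c)) ≤ u.countP (fun a => decide (a < d)) := by
  apply List.countP_mono_left
  intro x _ hx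
  simp at hx ⊢; omega

-- same letter, later occurrence: std strictly increases
lemma std_lt_of_eq (u : List ℕ) {i j : ℕ} (hij : i < j) (hj : j < u.length)
    (heq : u[i]'(hij.trans hj) = u[j]) :
    (stdWord u)[i]'(by rw [stdWord_length]; exact hij.trans hj) <
      (stdWord u)[j]'(by rwa [stdWord_length]) := by
  rw [stdWord_get u i (hij.trans hj), stdWord_get u j hj, heq]
  have h1 : (u.take (i+1)).count u[j] ≤ (u.take j).count u[j] := by
    have : u.take (i+1) = (u.take j).take (i+1) := by
      rw [List.take_take]; congr 1; omega
    rw [this]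
    exact (List.take_sublist _ _).count_le _
  have h2 : (u.take (j+1)).count u[j] = (u.take j).count u[j] + 1 := by
    rw [← List.take_concat_get' u j hj, List.count_append]
    simp
  omega

lemma std_lt_of_lt (u : List ℕ) {i j : ℕ} (hi : i < u.length) (hj : j < u.length)
    (hlt : u[i] < u[j]) :
    (stdWord u)[i]'(by rwa [stdWord_length]) < (stdWord u)[j]'(by rwa [stdWord_length]) := by
  have h1 := std_le u i hi
  have h2 := std_ge u j hj
  have h3 := countP_le_lt u hlt
  omega

-- main comparison: for i < j, u[i] ≤ u[j] ↔ std[i] < std[j]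
lemma std_compare (u : List ℕ) {i j : ℕ} (hij : i < j) (hj : j < u.length) :
    u[i]'(hij.trans hj) ≤ u[j] ↔
      (stdWord u)[i]'(by rw [stdWord_length]; exact hij.trans hj) <
        (stdWord u)[j]'(by rwa [stdWord_length]) := by
  constructor
  · intro h
    rcases eq_or_lt_of_le h with heq | hlt
    · exact std_lt_of_eq u hij hj heq
    · exact std_lt_of_lt u (hij.trans hj) hj hlt
  · intro h
    by_contra hc
    push_neg at hc
    exact absurd (std_lt_of_lt u hj (hij.trans hj) hc) (by omega)

-- range correspondence
lemma std_range (u : List ℕ) {p q : ℕ} (i : ℕ) (h : i < u.length) :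
    (p ≤ u[i] ∧ u[i] ≤ q) ↔
      (1 + u.countP (fun a => decide (a < p)) ≤ (stdWord u)[i]'(by rwa [stdWord_length]) ∧
        (stdWord u)[i]'(by rwa [stdWord_length]) ≤
          u.length - u.countP (fun a => decide (q < a))) := by
  have hb : u.length - u.countP (fun a => decide (q < a)) = u.countP (fun a => decide (a ≤ q)) := by
    have h0 := List.length_eq_countP_add_countP (fun a => decide (a ≤ q)) (l := u)
    have he : u.countP (fun a => decide (q < a)) =
        u.countP (fun a => ¬(fun a => decide (a ≤ q)) a) := by
      apply List.countP_congr
      intro x _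
      simp [Nat.not_le]
    beta_reduce at he
    omega
  rw [hb]
  have hle := std_le u i h
  have hge := std_ge u i h
  constructor
  · rintro ⟨h1, h2⟩
    constructor
    · have : u.countP (fun a => decide (a < p)) ≤ u.countP (fun a => decide (a < u[i])) := by
        apply List.countP_mono_left; intro x _ hx; simp at hx ⊢; omega
      omega
    · have : u.countP (fun a => decide (a ≤ u[i])) ≤ u.countP (fun a => decide (a ≤ q)) := by
        apply List.countP_mono_left; intro x _ hx; simp at hx ⊢; omega
      omega
  · rintro ⟨h1, h2⟩
    constructor
    · by_contra hc
      push_neg at hc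
      have : u.countP (fun a => decide (a ≤ u[i])) ≤ u.countP (fun a => decide (a < p)) := by
        apply List.countP_mono_left; intro x _ hx; simp at hx ⊢; omega
      omega
    · by_contra hc
      push_neg at hc
      have : u.countP (fun a => decide (a ≤ q)) ≤ u.countP (fun a => decide (a < u[i])) := by
        apply List.countP_mono_left; intro x _ hx; simp at hx ⊢; omega
      omega

lemma foldr_max_le_iff {l : List ℕ} {c : ℕ} : l.foldr max 0 ≤ c ↔ ∀ x ∈ l, x ≤ c := by
  induction l with
  | nil => simp
  | cons hd t ih => simp [ih, Nat.max_le]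

lemma le_foldr_max_s10 {l : List ℕ} {x : ℕ} (hx : x ∈ l) : x ≤ l.foldr max 0 := by
  induction l with
  | nil => simp at hx
  | cons hd t ih =>
    rcases List.mem_cons.mp hx with h | h
    · simp [h]
    · exact le_trans (ih h) (le_max_right _ _)

lemma dir1 (u : List ℕ) (p q : ℕ) (s : List ℕ) (hs : s.Sublist u)
    (hsort : s.Pairwise (· ≤ ·)) (hbd : ∀ x ∈ s, p ≤ x ∧ x ≤ q) :
    ∃ t : List ℕ, t.Sublist (stdWord u) ∧ t.Pairwise (· < ·) ∧
      (∀ x ∈ t, 1 + u.countP (fun a => decide (a < p)) ≤ x ∧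
         x ≤ u.length - u.countP (fun a => decide (q < a))) ∧ t.length = s.length := by
  obtain ⟨f, hf⟩ := List.sublist_iff_exists_fin_orderEmbedding_get_eq.mp hs
  have hlen : u.length = (stdWord u).length := (stdWord_length u).symm
  set v := stdWord u with hv
  refine ⟨List.ofFn (fun i : Fin s.length => v.get (Fin.cast hlen (f i))), ?_, ?_, ?_, by simp⟩
  · rw [List.sublist_iff_exists_fin_orderEmbedding_get_eq]
    refine ⟨((Fin.castOrderIso (List.length_ofFn)).toOrderEmbedding.trans f).trans
      (Fin.castOrderIso hlen).toOrderEmbedding, fun ix => ?_⟩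
    simp only [List.get_ofFn]
    rfl
  · rw [List.pairwise_ofFn]
    intro i j hij
    have h1 : s.get i ≤ s.get j := hsort.rel_get_of_lt hij
    rw [hf i, hf j] at h1
    have hij' : (f i : ℕ) < (f j : ℕ) := f.strictMono hij
    have := (std_compare u hij' (f j).is_lt).mp (by simpa [List.get_eq_getElem] using h1)
    simpa [List.get_eq_getElem] using this
  · intro x hx
    rw [List.mem_ofFn] at hx
    obtain ⟨i, rfl⟩ := hx
    have hmem : s.get i ∈ s := s.get_mem i
    have hb := hbd _ hmem
    rw [hf i] at hb
    have := (std_range u (p := p) (q := q) (f i) (f i).is_lt).mp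
      (by simpa [List.get_eq_getElem] using hb)
    simpa [List.get_eq_getElem] using this

lemma dir2 (u : List ℕ) (p q : ℕ) (t : List ℕ) (ht : t.Sublist (stdWord u))
    (hsort : t.Pairwise (· < ·))
    (hbd : ∀ x ∈ t, 1 + u.countP (fun a => decide (a < p)) ≤ x ∧
         x ≤ u.length - u.countP (fun a => decide (q < a))) :
    ∃ s : List ℕ, s.Sublist u ∧ s.Pairwise (· ≤ ·) ∧ (∀ x ∈ s, p ≤ x ∧ x ≤ q) ∧ s.length = t.length := by
  obtain ⟨f, hf⟩ := List.sublist_iff_exists_fin_orderEmbedding_get_eq.mp ht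
  have hlen : (stdWord u).length = u.length := stdWord_length u
  refine ⟨List.ofFn (fun i : Fin t.length => u.get (Fin.cast hlen (f i))), ?_, ?_, ?_, by simp⟩
  · rw [List.sublist_iff_exists_fin_orderEmbedding_get_eq]
    refine ⟨((Fin.castOrderIso (List.length_ofFn)).toOrderEmbedding.trans f).trans
      (Fin.castOrderIso hlen).toOrderEmbedding, fun ix => ?_⟩
    simp only [List.get_ofFn]
    rfl
  · rw [List.pairwise_ofFn]
    intro i j hij
    have h1 : t.get i < t.get j := hsort.rel_get_of_lt hij
    rw [hf i, hf j] at h1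
    have hij' : (f i : ℕ) < (f j : ℕ) := f.strictMono hij
    have hj : (f j : ℕ) < u.length := hlen ▸ (f j).is_lt
    have := (std_compare u hij' hj).mpr (by simpa [List.get_eq_getElem] using h1)
    simpa [List.get_eq_getElem] using this
  · intro x hx
    rw [List.mem_ofFn] at hx
    obtain ⟨i, rfl⟩ := hx
    have hmem : t.get i ∈ t := t.get_mem i
    have hb := hbd _ hmem
    rw [hf i] at hb
    have hi : (f i : ℕ) < u.length := hlen ▸ (f i).is_lt
    have := (std_range u (p := p) (q := q) (f i) hi).mpr
      (by simpa [List.get_eq_getElem] using hb)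
    simpa [List.get_eq_getElem] using this

theorem stmt10 (n : ℕ) (u : List ℕ) (hu : ∀ a ∈ u, 1 ≤ a ∧ a ≤ n)
    (p q : ℕ) (hp : 1 ≤ p) (hpq : p ≤ q) (hq : q ≤ n)
    (hex : ∃ a ∈ u, p ≤ a ∧ a ≤ q) :
    wis u p q =
      sis (stdWord u) (1 + u.countP (fun a => decide (a < p)))
        (u.length - u.countP (fun a => decide (q < a))) := by
  apply le_antisymm
  · rw [wis, foldr_max_le_iff]
    intro x hx
    rw [List.mem_map] at hx
    obtain ⟨s, hs, rfl⟩ := hx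
    rw [List.mem_filter, List.mem_sublists] at hs
    obtain ⟨hsub, hprop⟩ := hs
    obtain ⟨hsort, hbd⟩ := of_decide_eq_true hprop
    obtain ⟨t, htsub, htsort, htbd, htlen⟩ := dir1 u p q s hsub hsort hbd
    rw [← htlen, sis]
    apply le_foldr_max_s10
    rw [List.mem_map]
    refine ⟨t, ?_, rfl⟩
    rw [List.mem_filter, List.mem_sublists]
    exact ⟨htsub, decide_eq_true ⟨htsort, htbd⟩⟩
  · rw [sis, foldr_max_le_iff]
    intro x hx
    rw [List.mem_map] at hx
    obtain ⟨t, ht, rfl⟩ := hx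
    rw [List.mem_filter, List.mem_sublists] at ht
    obtain ⟨htsub, htprop⟩ := ht
    obtain ⟨htsort, htbd⟩ := of_decide_eq_true htprop
    obtain ⟨s, hsub, hsort, hbd, hlen⟩ := dir2 u p q t htsub htsort htbd
    rw [← hlen, wis]
    apply le_foldr_max_s10
    rw [List.mem_map]
    refine ⟨s, ?_, rfl⟩
    rw [List.mem_filter, List.mem_sublists]
    exact ⟨hsub, decide_eq_true ⟨hsort, hbd⟩⟩
end
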